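/- Let ρ be a d×d density matrix (positive semidefinite with trace 1), and let A₀, …, A_m be arbitrary d×d complex matrices. Define the (m+1)×(m+1) complex matrix Γ by Γ_{ij} = conj( tr(ρ·A_i) ) · tr(ρ·A_j) · tr( ρ · A_i · A_jᴴ ). Then Γ is Hermitian and positive semidefinite. -/

import Mathlib

open Matrix ComplexOrder

/-- For a density matrix `ρ` and arbitrary matrices `A₀, …, A_m`,
the state Hankel matrix `Γ_{ij} = conj(tr(ρA_i))·tr(ρA_j)·tr(ρ A_i A_jᴴ)` is
Hermitian and positive semidefinite. -/
theorem state_hankel_matrix_psd (d m : ℕ)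
    (ρ : Matrix (Fin d) (Fin d) ℂ) (hρ : ρ.PosSemidef) (htr : ρ.trace = 1)
    (A : Fin (m + 1) → Matrix (Fin d) (Fin d) ℂ)
    (Γ : Matrix (Fin (m + 1)) (Fin (m + 1)) ℂ)
    (hΓ : ∀ i j, Γ i j =
      starRingEnd ℂ ((ρ * A i).trace) * (ρ * A j).trace * (ρ * (A i * (A j)ᴴ)).trace) :
    Γ.IsHermitian ∧ Γ.PosSemidef := by
  set s := (open MatrixOrder in CFC.sqrt ρ) with hs_def
  have hs : s * s = ρ := by open MatrixOrder in exact CFC.sqrt_mul_sqrt_self ρ hρ.nonneg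
  have hsH : sᴴ = s := by open MatrixOrder in exact (CFC.sqrt_nonneg ρ).posSemidef.isHermitian
  set C : Fin (m + 1) → Matrix (Fin d) (Fin d) ℂ :=
    fun i => (ρ * A i).trace • ((A i)ᴴ * s) with hC_def
  set M : Matrix (Fin d × Fin d) (Fin (m + 1)) ℂ := fun p j => C j p.1 p.2 with hM_def
  have key : Γ = Mᴴ * M := by
    ext i j
    rw [hΓ]
    have h1 : (Mᴴ * M) i j = ((C i)ᴴ * C j).trace := by
      simp [Matrix.mul_apply, Matrix.trace, Matrix.diag, Matrix.conjTranspose_apply,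
        Fintype.sum_prod_type]
      rw [Finset.sum_comm]
    rw [h1, hC_def]
    simp only [Matrix.conjTranspose_smul, Matrix.conjTranspose_mul, hsH,
      Matrix.conjTranspose_conjTranspose, Matrix.smul_mul, Matrix.mul_smul,
      Matrix.trace_smul, smul_smul, smul_eq_mul]
    have h2 : (s * A i * ((A j)ᴴ * s)).trace = (ρ * (A i * (A j)ᴴ)).trace := by
      rw [← Matrix.mul_assoc, Matrix.trace_mul_comm, ← hs]
      rw [Matrix.mul_assoc, Matrix.mul_assoc]
    rw [h2]
    simp [RCLike.star_def, mul_comm, mul_assoc, mul_left_comm]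
  have hpsd : Γ.PosSemidef := key ▸ Matrix.posSemidef_conjTranspose_mul_self M
  exact ⟨hpsd.isHermitian, hpsd⟩
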